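/- Fix k ≥ 2, let c = k! - k² + 2k - 2, and let f(x) = (x^(k-1) + c·x^k)²·x^(2k) / (1 - x^(k-1) - c·x^k), expanded as a formal power series with coefficient sequence (u_n). Then the limit lim_{n→∞} u_n^(1/n) exists (the sequence has a proper exponential growth rate), and this growth rate tends to infinity as k → ∞. -/

import Mathlib

open Filter PowerSeries Topology

/-- The generating function x^{2k}(x^{k-1}+c x^k)² / (1 - x^{k-1} - c x^k) with
c = k! - k² + 2k - 2, as a formal power series over ℝ. -/
noncomputable def antichainGF (k : ℕ) : PowerSeries ℝ :=
  letI c : ℝ := (Nat.factorial k : ℝ) - (k : ℝ) ^ 2 + 2 * (k : ℝ) - 2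
  (X ^ (k - 1) + C c * X ^ k) ^ 2 * X ^ (2 * k) *
    (1 - X ^ (k - 1) - C c * X ^ k)⁻¹

noncomputable def cc (k : ℕ) : ℝ := (Nat.factorial k : ℝ) - (k:ℝ)^2 + 2*(k:ℝ) - 2
noncomputable def Wk (k : ℕ) : PowerSeries ℝ := (1 - X ^ (k-1) - C (cc k) * X ^ k)⁻¹
noncomputable def w (k n : ℕ) : ℝ := coeff n (Wk k)

lemma fact_ge (k : ℕ) (hk : 2 ≤ k) : k^2 + 2 ≤ k.factorial + 2*k := by
  induction k, hk using Nat.le_induction with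
  | base => decide
  | succ n hn ih =>
    have h4 : 2 ≤ n.factorial := le_trans hn (Nat.self_le_factorial n)
    have hfs : (n+1).factorial = n.factorial + n * n.factorial := by
      rw [Nat.factorial_succ]; ring
    have e2 : 2*n ≤ n * n.factorial := by
      calc 2*n = n*2 := by ring
      _ ≤ n*n.factorial := Nat.mul_le_mul_left n h4
    have hs : (n+1)^2 = n^2 + 2*n + 1 := by ring
    omega

lemma fact_ge3 (k : ℕ) (hk : 3 ≤ k) : k^2 + 3 ≤ k.factorial + 2*k := by
  induction k, hk using Nat.le_induction with
  | base => decide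
  | succ n hn ih =>
    have h4 : 2 ≤ n.factorial := le_trans (by omega) (Nat.self_le_factorial n)
    have hfs : (n+1).factorial = n.factorial + n * n.factorial := by
      rw [Nat.factorial_succ]; ring
    have e2 : 2*n ≤ n * n.factorial := by
      calc 2*n = n*2 := by ring
      _ ≤ n*n.factorial := Nat.mul_le_mul_left n h4
    have hs : (n+1)^2 = n^2 + 2*n + 1 := by ring
    omega

lemma cc_nonneg (k : ℕ) (hk : 2 ≤ k) : 0 ≤ cc k := by
  have h := fact_ge k hk
  have : ((k^2 + 2 : ℕ) : ℝ) ≤ ((k.factorial + 2*k : ℕ) : ℝ) := by exact_mod_cast h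
  push_cast at this
  unfold cc; linarith

lemma hDW (k : ℕ) (hk : 2 ≤ k) :
    (1 - X ^ (k-1) - C (cc k) * X ^ k) * Wk k = 1 := by
  apply PowerSeries.mul_inv_cancel
  have h1 : constantCoeff ((X:ℝ⟦X⟧) ^ (k-1)) = 0 := by
    rw [← coeff_zero_eq_constantCoeff, coeff_X_pow]
    simp only [ite_eq_right_iff]; intro h; omega
  have h2 : constantCoeff ((X:ℝ⟦X⟧) ^ k) = 0 := by
    rw [← coeff_zero_eq_constantCoeff, coeff_X_pow]
    simp only [ite_eq_right_iff]; intro h; omega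
  simp [h1, h2]

lemma w_zero (k : ℕ) (hk : 2 ≤ k) : w k 0 = 1 := by
  have h := congrArg (constantCoeff) (hDW k hk)
  have h1 : constantCoeff ((X:ℝ⟦X⟧) ^ (k-1)) = 0 := by
    rw [← coeff_zero_eq_constantCoeff, coeff_X_pow]
    simp only [ite_eq_right_iff]; intro h; omega
  have h2 : constantCoeff ((X:ℝ⟦X⟧) ^ k) = 0 := by
    rw [← coeff_zero_eq_constantCoeff, coeff_X_pow]
    simp only [ite_eq_right_iff]; intro h; omega
  simp only [map_mul, map_sub, map_one, h1, h2, map_mul, constantCoeff_C, mul_zero, sub_zero] at h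
  simpa [w, Wk, coeff_zero_eq_constantCoeff] using h

lemma w_rec (k : ℕ) (hk : 2 ≤ k) (n : ℕ) (hn : 1 ≤ n) :
    w k n = (if k-1 ≤ n then w k (n-(k-1)) else 0)
      + cc k * (if k ≤ n then w k (n-k) else 0) := by
  have h := congrArg (coeff n) (hDW k hk)
  rw [sub_mul, sub_mul, one_mul, mul_assoc, map_sub, map_sub, coeff_X_pow_mul',
    coeff_C_mul, coeff_X_pow_mul', coeff_one] at h
  rw [if_neg (show ¬ n = 0 by omega)] at h
  unfold w
  linarith [h]

lemma cc_one_le (k : ℕ) (hk : 3 ≤ k) : 1 ≤ cc k := by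
  have h := fact_ge3 k hk
  have : ((k^2 + 3 : ℕ) : ℝ) ≤ ((k.factorial + 2*k : ℕ) : ℝ) := by exact_mod_cast h
  push_cast at this
  unfold cc; linarith

lemma w_nonneg (k : ℕ) (hk : 2 ≤ k) : ∀ n, 0 ≤ w k n := by
  intro n
  induction n using Nat.strong_induction_on with
  | _ n ih =>
    rcases Nat.eq_zero_or_pos n with h | h
    · rw [h, w_zero k hk]; norm_num
    · rw [w_rec k hk n h]
      have hc := cc_nonneg k hk
      have t1 : 0 ≤ (if k-1 ≤ n then w k (n-(k-1)) else 0) := by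
        split_ifs with hh
        · exact ih _ (by omega)
        · exact le_refl 0
      have t2 : 0 ≤ (if k ≤ n then w k (n-k) else 0) := by
        split_ifs with hh
        · exact ih _ (by omega)
        · exact le_refl 0
      positivity

lemma w_km1 (k : ℕ) (hk : 2 ≤ k) : w k (k-1) = 1 := by
  rw [w_rec k hk (k-1) (by omega), if_pos (le_refl _), if_neg (by omega),
    Nat.sub_self, w_zero k hk, mul_zero, add_zero]

lemma w_k_ge (k : ℕ) (hk : 2 ≤ k) : cc k ≤ w k k := by
  rw [w_rec k hk k (by omega), if_pos (by omega), if_pos (le_refl _),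
    Nat.sub_self, w_zero k hk, mul_one]
  linarith [w_nonneg k hk (k - (k-1))]

lemma w_small (k : ℕ) (hk : 2 ≤ k) (n : ℕ) (h1 : 1 ≤ n) (h2 : n < k - 1) : w k n = 0 := by
  rw [w_rec k hk n h1, if_neg (by omega), if_neg (by omega), mul_zero, add_zero]

lemma w_supmul (k : ℕ) (hk : 2 ≤ k) : ∀ n m, w k m * w k n ≤ w k (m + n) := by
  intro n
  induction n using Nat.strong_induction_on with
  | _ n ih =>
    intro m
    have hc := cc_nonneg k hk
    rcases Nat.eq_zero_or_pos n with h0 | h0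
    · rw [h0, w_zero k hk, mul_one, add_zero]
    rcases Nat.lt_or_ge n (k-1) with hlt | hge
    · rw [w_small k hk n h0 hlt, mul_zero]
      exact w_nonneg k hk _
    rcases Nat.eq_or_lt_of_le hge with heq | hgt
    · -- n = k - 1
      rw [← heq, w_km1 k hk, mul_one]
      rw [w_rec k hk (m + (k-1)) (by omega), if_pos (by omega)]
      have : m + (k-1) - (k-1) = m := by omega
      rw [this]
      have t2 : 0 ≤ (if k ≤ m + (k-1) then w k (m + (k-1) - k) else 0) := by
        split_ifs with hh
        · exact w_nonneg k hk _
        · exact le_refl 0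
      nlinarith
    · -- n ≥ k
      have hnk : k ≤ n := by omega
      rw [w_rec k hk n (by omega), if_pos (by omega), if_pos hnk]
      rw [w_rec k hk (m+n) (by omega), if_pos (by omega), if_pos (by omega)]
      have e1 : m + n - (k-1) = m + (n - (k-1)) := by omega
      have e2 : m + n - k = m + (n - k) := by omega
      rw [e1, e2]
      have i1 := ih (n - (k-1)) (by omega) m
      have i2 := ih (n - k) (by omega) m
      nlinarith [w_nonneg k hk m]

lemma w_pow (k : ℕ) (hk : 2 ≤ k) (m : ℕ) : ∀ b, (w k m)^b ≤ w k (m*b) := by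
  intro b
  induction b with
  | zero => simp [w_zero k hk]
  | succ b ih =>
    have h1 := w_supmul k hk m (m*b)
    have h2 : m*b + m = m*(b+1) := by ring
    calc (w k m)^(b+1) = (w k m)^b * w k m := by ring
    _ ≤ w k (m*b) * w k m := by
        apply mul_le_mul_of_nonneg_right ih (w_nonneg k hk m)
    _ = w k m * w k (m*b) := by ring
    _ ≤ w k (m + m*b) := w_supmul k hk (m*b) m
    _ = w k (m*b + m) := by rw [Nat.add_comm]
    _ = w k (m*(b+1)) := by rw [h2]

lemma w_one_le (k : ℕ) (hk : 2 ≤ k) : ∀ n, (k-2)*(k-1) ≤ n → 1 ≤ w k n := by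
  intro n
  induction n using Nat.strong_induction_on with
  | _ n ih =>
    intro hn
    rcases Nat.lt_or_ge n ((k-2)*(k-1) + (k-1)) with hcase | hcase
    · set j := n - (k-2)*(k-1) with hj
      have hjk : j ≤ k - 2 := by omega
      have h2 : 1 ≤ w k (k*j) := by
        rcases Nat.lt_or_ge k 3 with h3 | h3
        · have : j = 0 := by omega
          rw [this, Nat.mul_zero, w_zero k hk]
        · have hc1 := cc_one_le k h3
          have hwk : 1 ≤ w k k := le_trans hc1 (w_k_ge k hk)
          calc (1:ℝ) = 1^j := (one_pow j).symm
          _ ≤ (w k k)^j := by apply pow_le_pow_left₀ (by norm_num) hwk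
          _ ≤ w k (k*j) := w_pow k hk k j
      have h1 : 1 ≤ w k ((k-1)*(k-2-j)) := by
        have := w_pow k hk (k-1) (k-2-j)
        rw [w_km1 k hk, one_pow] at this; exact this
      have hrep : (k-1)*(k-2-j) + k*j = n := by
        obtain ⟨b, hb⟩ : ∃ b, k = b + 1 := ⟨k-1, by omega⟩
        subst hb
        have e1 : b + 1 - 1 = b := by omega
        set a := b + 1 - 2 - j with ha2
        have ha : b + 1 - 2 = a + j := by omega
        have hprod : (b+1-2)*(b+1-1) = (a+j)*b := by rw [ha, e1]
        have hn' : n = (a+j)*b + j := by omega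
        rw [e1, hn']
        ring
      calc (1:ℝ) = 1 * 1 := by norm_num
      _ ≤ w k ((k-1)*(k-2-j)) * w k (k*j) := by
          apply mul_le_mul h1 h2 (by norm_num) (le_trans zero_le_one h1)
      _ ≤ w k ((k-1)*(k-2-j) + k*j) := w_supmul k hk _ _
      _ = w k n := by rw [hrep]
    · have hsup := w_supmul k hk (n - (k-1)) (k-1)
      rw [w_km1 k hk, one_mul] at hsup
      have hih : 1 ≤ w k (n - (k-1)) := ih _ (by omega) (by omega)
      have : (k-1) + (n - (k-1)) = n := by omega
      rw [this] at hsup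
      exact le_trans hih hsup

lemma w_le (k : ℕ) (hk : 2 ≤ k) : ∀ n, w k n ≤ (1 + cc k)^n := by
  intro n
  have hc := cc_nonneg k hk
  induction n using Nat.strong_induction_on with
  | _ n ih =>
    rcases Nat.eq_zero_or_pos n with h | h
    · rw [h, w_zero k hk, pow_zero]
    · rw [w_rec k hk n h]
      have hb : (1:ℝ) ≤ 1 + cc k := by linarith
      have key : ∀ j, 1 ≤ j → j ≤ n → (1 + cc k)^(n - j) ≤ (1 + cc k)^(n-1) := by
        intro j hj0 hj
        exact pow_le_pow_right₀ hb (by omega)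
      have t1 : (if k-1 ≤ n then w k (n-(k-1)) else 0) ≤ (1 + cc k)^(n-1) := by
        split_ifs with hh
        · exact le_trans (ih _ (by omega)) (key (k-1) (by omega) hh)
        · positivity
      have t2 : (if k ≤ n then w k (n-k) else 0) ≤ (1 + cc k)^(n-1) := by
        split_ifs with hh
        · exact le_trans (ih _ (by omega)) (key k (by omega) hh)
        · positivity
      have hpow : (1 + cc k)^n = (1 + cc k) * (1 + cc k)^(n-1) := by
        conv_lhs => rw [show n = (n-1) + 1 by omega]
        rw [pow_succ]; ring
      have hp : (0:ℝ) ≤ (1 + cc k)^(n-1) := by positivity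
      calc _ ≤ (1 + cc k)^(n-1) + cc k * (1 + cc k)^(n-1) := by nlinarith
      _ = (1 + cc k)^n := by rw [hpow]; ring

noncomputable def Sk (k : ℕ) : Set ℝ :=
  {x | ∃ n : ℕ, max 1 ((k-2)*(k-1)) ≤ n ∧ x = w k n ^ ((1:ℝ)/n)}
noncomputable def Lk (k : ℕ) : ℝ := sSup (Sk k)

lemma Sk_nonempty (k : ℕ) : (Sk k).Nonempty :=
  ⟨_, ⟨max 1 ((k-2)*(k-1)), le_refl _, rfl⟩⟩

lemma mem_Sk {k n : ℕ} (hn : max 1 ((k-2)*(k-1)) ≤ n) : w k n ^ ((1:ℝ)/n) ∈ Sk k :=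
  ⟨n, hn, rfl⟩

lemma Sk_bddAbove (k : ℕ) (hk : 2 ≤ k) : BddAbove (Sk k) := by
  use 1 + cc k
  rintro x ⟨n, hn, rfl⟩
  have hn1 : 1 ≤ n := le_trans (le_max_left _ _) hn
  have h1 : w k n ≤ (1 + cc k)^n := w_le k hk n
  have hcb : (0:ℝ) ≤ 1 + cc k := by linarith [cc_nonneg k hk]
  have hne : ((n:ℝ)) ≠ 0 := Nat.cast_ne_zero.mpr (by omega)
  calc w k n ^ ((1:ℝ)/n) ≤ ((1+cc k)^n) ^ ((1:ℝ)/n) :=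
      Real.rpow_le_rpow (w_nonneg k hk n) h1 (by positivity)
  _ = ((1+cc k) ^ (n:ℝ)) ^ ((1:ℝ)/n) := by rw [Real.rpow_natCast]
  _ = (1+cc k) ^ ((n:ℝ) * ((1:ℝ)/n)) := (Real.rpow_mul hcb _ _).symm
  _ = 1 + cc k := by rw [mul_one_div, div_self hne, Real.rpow_one]

lemma le_Lk {k : ℕ} (hk : 2 ≤ k) {n : ℕ} (hn : max 1 ((k-2)*(k-1)) ≤ n) :
    w k n ^ ((1:ℝ)/n) ≤ Lk k :=
  le_csSup (Sk_bddAbove k hk) (mem_Sk hn)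

lemma one_le_Lk {k : ℕ} (hk : 2 ≤ k) : 1 ≤ Lk k := by
  refine le_trans ?_ (le_Lk hk (le_refl (max 1 ((k-2)*(k-1)))))
  exact Real.one_le_rpow (w_one_le k hk _ (le_max_right _ _)) (by positivity)

lemma exp_low (m n0 n q : ℕ) (hm : 1 ≤ m) (hn : n0 + m + 1 ≤ n) (h1 : n ≤ m*q + n0 + m) :
    (1:ℝ)/m - ((n0:ℝ)+m)/m * (1/n) ≤ (q:ℝ)/n := by
  have hmR : (0:ℝ) < m := by exact_mod_cast hm
  have hnR : (0:ℝ) < n := by exact_mod_cast Nat.lt_of_lt_of_le Nat.zero_lt_one (by omega : 1 ≤ n)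
  have h1R : (n:ℝ) ≤ (m:ℝ)*q + n0 + m := by exact_mod_cast h1
  have key : (1:ℝ)/m - ((n0:ℝ)+m)/m * (1/n) = ((n:ℝ) - ((n0:ℝ)+m))/(m*n) := by
    field_simp
    try ring
  rw [key, div_le_div_iff₀ (by positivity) hnR]
  nlinarith

lemma exp_up (m n0 n q : ℕ) (hm : 1 ≤ m) (hn : 1 ≤ n) (h1 : m*q ≤ n) :
    (q:ℝ)/n ≤ (1:ℝ)/m := by
  have hmR : (0:ℝ) < m := by exact_mod_cast hm
  have hnR : (0:ℝ) < n := by exact_mod_cast Nat.lt_of_lt_of_le Nat.zero_lt_one hn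
  have h1R : (m:ℝ)*q ≤ n := by exact_mod_cast h1
  rw [div_le_div_iff₀ hnR hmR]
  nlinarith

lemma exponent_tendsto (m n0 : ℕ) (hm : 1 ≤ m) :
    Tendsto (fun n : ℕ => (((n - n0)/m : ℕ) : ℝ)/n) atTop (𝓝 ((1:ℝ)/m)) := by
  have l1 : Tendsto (fun n : ℕ => (1:ℝ)/m - ((n0:ℝ)+m)/m * (1/n)) atTop (𝓝 ((1:ℝ)/m)) := by
    have h2 : Tendsto (fun n : ℕ => ((n0:ℝ)+m)/m * (1/n)) atTop (𝓝 0) := by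
      simpa using tendsto_one_div_atTop_nhds_zero_nat.const_mul (((n0:ℝ)+m)/m)
    have h3 : Tendsto (fun n : ℕ => (1:ℝ)/m - ((n0:ℝ)+m)/m * (1/n)) atTop
        (𝓝 ((1:ℝ)/m - 0)) := tendsto_const_nhds.sub h2
    simpa using h3
  apply tendsto_of_tendsto_of_tendsto_of_le_of_le' l1 tendsto_const_nhds
  · filter_upwards [eventually_ge_atTop (n0 + m + 1)] with n hn
    apply exp_low m n0 n _ hm hn
    have hdm := Nat.div_add_mod (n - n0) m
    have hmod := Nat.mod_lt (n - n0) (show 0 < m by omega)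
    omega
  · filter_upwards [eventually_ge_atTop 1] with n hn
    apply exp_up m n0 n _ hm hn
    have h := Nat.div_mul_le_self (n - n0) m
    have h2 : m * ((n-n0)/m) = (n-n0)/m * m := Nat.mul_comm _ _
    omega

lemma w_tendsto (k : ℕ) (hk : 2 ≤ k) :
    Tendsto (fun n : ℕ => w k n ^ ((1:ℝ)/n)) atTop (𝓝 (Lk k)) := by
  rw [tendsto_order]
  constructor
  · intro a ha
    obtain ⟨x, ⟨m, hm, rfl⟩, hax⟩ := exists_lt_of_lt_csSup (Sk_nonempty k) ha
    set n0 := (k-2)*(k-1) with hn0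
    have hm1 : 1 ≤ m := le_trans (le_max_left _ _) hm
    have hmn0 : n0 ≤ m := le_trans (le_max_right _ _) hm
    have hwm : 1 ≤ w k m := w_one_le k hk m hmn0
    have hwm0 : (0:ℝ) < w k m := lt_of_lt_of_le zero_lt_one hwm
    have hG : Tendsto (fun n : ℕ => (w k m) ^ ((((n - n0)/m : ℕ):ℝ)/n)) atTop
        (𝓝 ((w k m) ^ ((1:ℝ)/m))) :=
      Filter.Tendsto.rpow tendsto_const_nhds (exponent_tendsto m n0 hm1)
        (Or.inl (ne_of_gt hwm0))
    have hev1 : ∀ᶠ n : ℕ in atTop, a < (w k m) ^ ((((n - n0)/m : ℕ):ℝ)/n) :=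
      hG.eventually (lt_mem_nhds hax)
    have hev2 : ∀ᶠ n : ℕ in atTop,
        (w k m) ^ ((((n - n0)/m : ℕ):ℝ)/n) ≤ w k n ^ ((1:ℝ)/n) := by
      filter_upwards [eventually_ge_atTop (n0 + m + 1)] with n hn
      obtain ⟨q, hq⟩ : ∃ q, (n - n0)/m = q := ⟨_, rfl⟩
      rw [hq]
      have hdm := Nat.div_add_mod (n - n0) m
      rw [hq] at hdm
      obtain ⟨r, hqr, hrge⟩ : ∃ r, m*q + r = n ∧ n0 ≤ r := ⟨n - m*q, by omega, by omega⟩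
      have h1 : (w k m)^q ≤ w k (m*q) := w_pow k hk m q
      have h2 : 1 ≤ w k r := w_one_le k hk r hrge
      have h3 : w k (m*q) * w k r ≤ w k (m*q + r) := by
        have := w_supmul k hk r (m*q)
        linarith
      have h4 : (w k m)^q ≤ w k n := by
        rw [← hqr]
        calc (w k m)^q = (w k m)^q * 1 := by ring
        _ ≤ w k (m*q) * w k r := by
            apply mul_le_mul h1 h2 (by norm_num) (w_nonneg k hk _)
        _ ≤ w k (m*q + r) := h3
      have hnR : ((n:ℝ)) ≠ 0 := Nat.cast_ne_zero.mpr (by omega)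
      calc (w k m) ^ (((q:ℕ):ℝ)/n) = ((w k m)^(q:ℕ)) ^ ((1:ℝ)/n) := by
            rw [← Real.rpow_natCast (w k m) q, ← Real.rpow_mul (le_of_lt hwm0)]
            rw [mul_one_div]
      _ ≤ w k n ^ ((1:ℝ)/n) := by
            apply Real.rpow_le_rpow (by positivity) h4 (by positivity)
    filter_upwards [hev1, hev2] with n h1 h2
    exact lt_of_lt_of_le h1 h2
  · intro b hb
    filter_upwards [eventually_ge_atTop (max 1 ((k-2)*(k-1)))] with n hn
    exact lt_of_le_of_lt (le_Lk hk hn) hb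

lemma Lk_lb (k : ℕ) (hk : 3 ≤ k) : cc k ^ ((1:ℝ)/k) ≤ Lk k := by
  have hk2 : 2 ≤ k := by omega
  have hc1 := cc_one_le k hk
  have hc0 : (0:ℝ) ≤ cc k := by linarith
  set b := (k-2)*(k-1) with hb
  have hb1 : 1 ≤ b := by
    have : 1 ≤ k - 2 := by omega
    have : 1 ≤ k - 1 := by omega
    calc 1 = 1*1 := rfl
    _ ≤ (k-2)*(k-1) := Nat.mul_le_mul (by omega) (by omega)
  have hwk : cc k ≤ w k k := w_k_ge k hk2
  have hpow : (cc k)^b ≤ w k (k*b) := by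
    calc (cc k)^b ≤ (w k k)^b := pow_le_pow_left₀ hc0 hwk b
    _ ≤ w k (k*b) := w_pow k hk2 k b
  have hmem : max 1 ((k-2)*(k-1)) ≤ k*b := by
    have : b ≤ k*b := Nat.le_mul_of_pos_left b (by omega)
    omega
  have hL := le_Lk hk2 hmem
  refine le_trans ?_ hL
  have hkb : ((k*b : ℕ):ℝ) = (k:ℝ)*(b:ℝ) := by push_cast; ring
  have hkne : ((k:ℝ)) ≠ 0 := by positivity
  have hbne : ((b:ℝ)) ≠ 0 := Nat.cast_ne_zero.mpr (by omega)
  have e1 : cc k ^ ((1:ℝ)/k) = ((cc k)^b) ^ ((1:ℝ)/(k*b : ℕ)) := by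
    rw [← Real.rpow_natCast (cc k) b, ← Real.rpow_mul hc0, hkb]
    congr 1
    field_simp
  rw [e1]
  exact Real.rpow_le_rpow (by positivity) hpow (by positivity)

lemma coeff_eq (k : ℕ) (hk : 2 ≤ k) (n : ℕ) (hn : 3*k+1 ≤ n) :
    coeff n (antichainGF k) = w k (n - 2*k) := by
  have hID : antichainGF k = X^(2*k) *
      (Wk k - 1 - (X^(k-1) + C (cc k) * X^k)) := by
    show (X ^ (k - 1) + C (cc k) * X ^ k) ^ 2 * X ^ (2 * k) * Wk k = _
    have h := hDW k hk
    linear_combination (-(X^(2*k) : ℝ⟦X⟧) * (1 + (X^(k-1) + C (cc k) * X^k))) * h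
  rw [hID, coeff_X_pow_mul', if_pos (by omega)]
  rw [map_sub, map_sub, map_add, coeff_C_mul, coeff_X_pow, coeff_X_pow, coeff_one]
  rw [if_neg (by omega), if_neg (by omega), if_neg (by omega)]
  unfold w
  ring

lemma two_mul_add_one_le (k : ℕ) (hk : 3 ≤ k) : 2*k+1 ≤ 2^k := by
  induction k, hk using Nat.le_induction with
  | base => decide
  | succ n hn ih =>
    have : 2^(n+1) = 2^n + 2^n := by ring
    have h2 : 2 ≤ 2^n := Nat.one_lt_two_pow (by omega)
    omega

lemma sq_le_two_pow (k : ℕ) (hk : 4 ≤ k) : k^2 ≤ 2^k := by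
  induction k, hk using Nat.le_induction with
  | base => decide
  | succ n hn ih =>
    have h1 := two_mul_add_one_le n (by omega)
    have h2 : 2^(n+1) = 2^n + 2^n := by ring
    have h3 : (n+1)^2 = n^2 + 2*n + 1 := by ring
    omega

lemma Lk_tendsto : Tendsto Lk atTop atTop := by
  rw [tendsto_atTop]
  intro A
  set B := max A 1 with hBdef
  have hB1 : (1:ℝ) ≤ B := le_max_right _ _
  have hB0 : (0:ℝ) < B := lt_of_lt_of_le zero_lt_one hB1
  have h1 := FloorSemiring.tendsto_pow_div_factorial_atTop (K := ℝ) B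
  have h2 := FloorSemiring.tendsto_pow_div_factorial_atTop (K := ℝ) 2
  have he1 : ∀ᶠ k : ℕ in atTop, B^k / k.factorial < 1/4 :=
    h1.eventually (eventually_lt_nhds (by norm_num))
  have he2 : ∀ᶠ k : ℕ in atTop, (2:ℝ)^k / k.factorial < 1/4 :=
    h2.eventually (eventually_lt_nhds (by norm_num))
  filter_upwards [he1, he2, eventually_ge_atTop 4] with k hk1 hk2 hk4
  have hk3 : 3 ≤ k := by omega
  have hfpos : (0:ℝ) < k.factorial := by exact_mod_cast Nat.factorial_pos k
  have hb1 : B^k ≤ k.factorial/4 := by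
    rw [div_lt_iff₀ hfpos] at hk1; linarith
  have hb2 : (2:ℝ)^k ≤ k.factorial/4 := by
    rw [div_lt_iff₀ hfpos] at hk2; linarith
  have hsq : ((k:ℝ))^2 ≤ (2:ℝ)^k := by
    have := sq_le_two_pow k hk4
    exact_mod_cast this
  have hcc : B^k ≤ cc k := by
    unfold cc
    have hkR : (2:ℝ) ≤ k := by exact_mod_cast (by omega : 2 ≤ k)
    nlinarith
  have hBk : B ≤ cc k ^ ((1:ℝ)/k) := by
    have e1 : B = (B^k) ^ ((1:ℝ)/k) := by
      rw [← Real.rpow_natCast B k, ← Real.rpow_mul (le_of_lt hB0)]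
      rw [mul_one_div, div_self (Nat.cast_ne_zero.mpr (by omega)), Real.rpow_one]
    rw [e1]
    exact Real.rpow_le_rpow (by positivity) hcc (by positivity)
  calc A ≤ B := le_max_left _ _
  _ ≤ cc k ^ ((1:ℝ)/k) := hBk
  _ ≤ Lk k := Lk_lb k hk3

theorem antichain_growth_rate :
    ∃ L : ℕ → ℝ,
      (∀ k : ℕ, 2 ≤ k →
        Tendsto (fun n : ℕ => (PowerSeries.coeff n (antichainGF k)) ^ ((1 : ℝ) / n))
          atTop (nhds (L k))) ∧
      Tendsto L atTop atTop := by
  refine ⟨Lk, fun k hk => ?_, Lk_tendsto⟩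
  have hbase : Tendsto (fun n : ℕ => w k (n - 2*k) ^ ((1:ℝ)/((n - 2*k : ℕ):ℝ)))
      atTop (𝓝 (Lk k)) := (w_tendsto k hk).comp (tendsto_sub_atTop_nat (2*k))
  have hexp : Tendsto (fun n : ℕ => ((n - 2*k : ℕ):ℝ)/(n:ℝ)) atTop (𝓝 1) := by
    have h0 : Tendsto (fun n : ℕ => 1 - ((2*k:ℕ):ℝ)*(1/n)) atTop (𝓝 1) := by
      simpa using tendsto_const_nhds.sub
        (tendsto_one_div_atTop_nhds_zero_nat.const_mul ((2*k:ℕ):ℝ))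
    apply h0.congr'
    filter_upwards [eventually_ge_atTop (2*k+1)] with n hn
    have hnne : ((n:ℕ):ℝ) ≠ 0 := Nat.cast_ne_zero.mpr (by omega)
    rw [Nat.cast_sub (by omega)]
    field_simp
  have hcomb := Filter.Tendsto.rpow hbase hexp (Or.inr zero_lt_one)
  rw [Real.rpow_one] at hcomb
  apply Filter.Tendsto.congr' _ hcomb
  filter_upwards [eventually_ge_atTop (3*k+1)] with n hn
  rw [coeff_eq k hk n hn]
  rw [← Real.rpow_mul (w_nonneg k hk _)]
  congr 1
  have hne : ((n - 2*k:ℕ):ℝ) ≠ 0 := Nat.cast_ne_zero.mpr (by omega)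
  have hnne : ((n:ℕ):ℝ) ≠ 0 := Nat.cast_ne_zero.mpr (by omega)
  field_simp
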